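/- Let S be a square skew left brace, let P be its set of projections, fix e ∈ P, and let H = {h ∈ S | h·h* = e and h*·h = e}. Then the map ψ : P×H×P → S, (i,g,j) ↦ i·g·j, is a bijection, and for all i,j,k,l ∈ P and g,h ∈ H: (i·g·j)·(k·h·l) = i·(g·h)·l; (i·g·j)* = j·g*·i; (i·g·j) + (k·h·l) = k·(g+h)·j; and -(i·g·j) = j·(-g)·i. -/
import Mathlib


/-- A dual weak left ⋆-brace: `(S,+,-)` and `(S,·,⋆)` are regular ⋆-semigroups,
and `x·(y+z) = x·y + (-x) + x·z`, `(-x)+x = x·x⋆`, `x+(-x) = x⋆·x` hold. -/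
class DWLSB (S : Type*) extends Add S, Mul S, Neg S, Star S where
  add_assoc' : ∀ x y z : S, x + y + z = x + (y + z)
  neg_reg : ∀ x : S, x + -x + x = x
  neg_neg' : ∀ x : S, -(-x) = x
  neg_add' : ∀ x y : S, -(x + y) = -y + -x
  mul_assoc' : ∀ x y z : S, x * y * z = x * (y * z)
  star_reg : ∀ x : S, x * star x * x = x
  star_star' : ∀ x : S, star (star x) = x
  star_mul' : ∀ x y : S, star (x * y) = star y * star x
  distrib' : ∀ x y z : S, x * (y + z) = x * y + -x + x * z
  neg_add_self' : ∀ x : S, -x + x = x * star x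
  add_neg_self' : ∀ x : S, x + -x = star x * x

/-- The set of right distributors of a dual weak left ⋆-brace. -/
def Dr (S : Type*) [DWLSB S] : Set S :=
  {z | ∀ a b : S, (a + b) * z = a * z + -z + b * z}

/-- `r : S×S → S×S` is a set-theoretic solution of the Yang–Baxter equation:
`(r×id)∘(id×r)∘(r×id) = (id×r)∘(r×id)∘(id×r)`. -/
def IsYBESolution {S : Type*} (r : S × S → S × S) : Prop :=
  (fun p : S × S × S => ((r (p.1, p.2.1)).1, (r (p.1, p.2.1)).2, p.2.2)) ∘
      (fun p : S × S × S => (p.1, r (p.2.1, p.2.2))) ∘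
      (fun p : S × S × S => ((r (p.1, p.2.1)).1, (r (p.1, p.2.1)).2, p.2.2)) =
    (fun p : S × S × S => (p.1, r (p.2.1, p.2.2))) ∘
      (fun p : S × S × S => ((r (p.1, p.2.1)).1, (r (p.1, p.2.1)).2, p.2.2)) ∘
      (fun p : S × S × S => (p.1, r (p.2.1, p.2.2)))

/-- A square skew left brace: a dual weak left ⋆-brace with `x·x⋆ = x·y·y⋆·x⋆`,
i.e. `(S,·,⋆)` is completely simple. -/
class SSLB (S : Type*) extends DWLSB S where
  square : ∀ x y : S, x * star x = x * y * star y * star x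

namespace SSLBAux

variable {S : Type*} [SSLB S]

instance : Semigroup S := { mul_assoc := DWLSB.mul_assoc' }
instance : AddSemigroup S := { add_assoc := DWLSB.add_assoc' }
instance : InvolutiveNeg S := { neg_neg := DWLSB.neg_neg' }
instance : StarMul S := { star_involutive := DWLSB.star_star', star_mul := DWLSB.star_mul' }

theorem nreg (x : S) : x + -x + x = x := DWLSB.neg_reg x
theorem sreg (x : S) : x * star x * x = x := DWLSB.star_reg x
theorem negadd (x y : S) : -(x + y) = -y + -x := DWLSB.neg_add' x y
theorem dist (x y z : S) : x * (y + z) = x * y + -x + x * z := DWLSB.distrib' x y z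
theorem nas (x : S) : -x + x = x * star x := DWLSB.neg_add_self' x
theorem ans (x : S) : x + -x = star x * x := DWLSB.add_neg_self' x
theorem sq (x y : S) : x * star x = x * y * star y * star x := SSLB.square x y

/-- `x·x⋆` is idempotent. -/
theorem ms_idem (x : S) : (x * star x) * (x * star x) = x * star x := by
  have h := sreg (star x)
  rw [star_star] at h
  calc (x * star x) * (x * star x)
      = x * (star x * (x * star x)) := by rw [mul_assoc x (star x) (x * star x)]
    _ = x * (star x * x * star x) := by rw [← mul_assoc (star x) x (star x)]
    _ = x * star x := by rw [h]

/-- `x·x⋆` is self-adjoint. -/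
theorem ms_star (x : S) : star (x * star x) = x * star x := by
  rw [star_mul, star_star]

theorem sm_idem (x : S) : (star x * x) * (star x * x) = star x * x := by
  have := ms_idem (star x); rwa [star_star] at this

theorem sm_star (x : S) : star (star x * x) = star x * x := by
  rw [star_mul, star_star]

/-- M1 : `e·f·e = e` for projections. -/
theorem m1 {e f : S} (he : e * e = e) (hes : star e = e)
    (hf : f * f = f) (hfs : star f = f) : e * f * e = e := by
  have h := sq e f
  rw [hes, hfs, he, mul_assoc e f f, hf] at h
  exact h.symm

theorem m1' {e f : S} (he : e * e = e) (hes : star e = e)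
    (hf : f * f = f) (hfs : star f = f) : e * (f * e) = e := by
  rw [← mul_assoc]; exact m1 he hes hf hfs

/-- `x·e·x⋆ = x·x⋆`. -/
theorem square1 {e : S} (he : e * e = e) (hes : star e = e) (x : S) :
    x * e * star x = x * star x := by
  have h := sq x e
  rw [hes, mul_assoc x e e, he] at h
  exact h.symm

/-- `x⋆·e·x = x⋆·x`. -/
theorem square2 {e : S} (he : e * e = e) (hes : star e = e) (x : S) :
    star x * e * x = star x * x := by
  have := square1 he hes (star x)
  rwa [star_star] at this

/-- `-e = e` for projections. -/
theorem negproj {e : S} (he : e * e = e) (hes : star e = e) : -e = e := by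
  have h1 : -e + e = e := by rw [nas e, hes, he]
  have h2 : -e = -(-e + e) := by rw [h1]
  rw [negadd, neg_neg, h1] at h2
  exact h2

/-- `e + e = e` for projections. -/
theorem projadd {e : S} (he : e * e = e) (hes : star e = e) : e + e = e := by
  have h := ans e
  rwa [hes, he, negproj he hes] at h

theorem g1r (x : S) : x + x * star x = x := by
  have h := nreg x
  rwa [add_assoc, nas] at h

theorem g1l (x : S) : star x * x + x = x := by
  have h := nreg x
  rwa [ans] at h

theorem negmulstar (x : S) : -x * star (-x) = star x * x := by
  have h := nas (-x)
  rw [neg_neg, ans] at h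
  exact h.symm

theorem starmulneg (x : S) : star (-x) * -x = x * star x := by
  have h := ans (-x)
  rw [neg_neg, nas] at h
  exact h.symm

theorem edist {e : S} (he : e * e = e) (hes : star e = e) (y z : S) :
    e * (y + z) = e * y + e + e * z := by
  have h := dist e y z
  rwa [negproj he hes] at h

/-- `(w·e)·(w·e)⋆ = w·w⋆`. -/
theorem we_ms {e : S} (he : e * e = e) (hes : star e = e) (w : S) :
    (w * e) * star (w * e) = w * star w := by
  rw [star_mul, hes]
  calc (w * e) * (e * star w) = w * e * e * star w := by rw [mul_assoc (w*e) e (star w)]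
    _ = w * (e * e) * star w := by rw [mul_assoc w e e]
    _ = w * e * star w := by rw [he]
    _ = w * star w := square1 he hes w

/-- `(w·e)⋆·(w·e) = e·(w⋆·w)·e`. -/
theorem we_sm {e : S} (he : e * e = e) (hes : star e = e) (w : S) :
    star (w * e) * (w * e) = e * (star w * w) * e := by
  rw [star_mul, hes]
  calc (e * star w) * (w * e) = e * star w * w * e := by rw [mul_assoc (e*(star w)) w e]
    _ = e * (star w * w) * e := by rw [mul_assoc e (star w) w]

/-- Key lemma K2b: `-w + w·e = w·w⋆`. -/
theorem k2b {e : S} (he : e * e = e) (hes : star e = e) (w : S) :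
    -w + w * e = w * star w := by
  have h0 : w * e = w * e + -w + w * e := by
    have h := dist w e e
    rwa [projadd he hes] at h
  have h1 : -(w * e) + w * e = w * star w := by rw [nas, we_ms he hes]
  have nreg' : -w + w + -w = -w := by
    have := nreg (-w); rwa [neg_neg] at this
  calc -w + w * e
      = -w + w + -w + w * e := by rw [nreg']
    _ = w * star w + -w + w * e := by rw [nas]
    _ = -(w * e) + w * e + -w + w * e := by rw [h1]
    _ = -(w * e) + (w * e + -w) + w * e := by rw [add_assoc (-(w*e)) (w*e) (-w)]
    _ = -(w * e) + (w * e + -w + w * e) := by rw [add_assoc]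
    _ = -(w * e) + w * e := by rw [← h0]
    _ = w * star w := h1

/-- L3 : `w⋆·w + w·e = w`. -/
theorem l3 {e : S} (he : e * e = e) (hes : star e = e) (w : S) :
    star w * w + w * e = w := by
  have h := g1r w
  rw [← k2b he hes w, ← add_assoc, ans] at h
  exact h

/-- L2 : `e + e·f = e` for projections `e`, `f`. -/
theorem l2 {e f : S} (he : e * e = e) (hes : star e = e)
    (hf : f * f = f) (hfs : star f = f) : e + e * f = e := by
  have h := l3 hf hfs e
  rwa [hes, he] at h

/-- Additive M1 : `e + p + e = e` for projections. -/
theorem am1 {e p : S} (he : e * e = e) (hes : star e = e)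
    (hp : p * p = p) (hps : star p = p) : e + p + e = e := by
  set z := p + e with hz
  have hQ : e + p + e = z * star z := by
    have h := nas z
    rw [hz, negadd, negproj he hes, negproj hp hps] at h
    have hsum : (e + p) + (p + e) = e + p + e := by
      rw [← add_assoc, add_assoc e p p, projadd hp hps]
    exact hsum.symm.trans h
  have hQi : (z * star z) * (z * star z) = z * star z := ms_idem z
  have hQs : star (z * star z) = z * star z := ms_star z
  have heQ : e * (z * star z) = e := by
    rw [← hQ]
    calc e * (e + p + e) = e * (e + p) + e + e * e := edist he hes (e+p) e
      _ = (e * e + e + e * p) + e + e := by rw [edist he hes e p, he]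
      _ = ((e + e) + e * p) + e + e := by rw [he]
      _ = (e + e * p) + e + e := by rw [projadd he hes]
      _ = e + e + e := by rw [l2 he hes hp hps]
      _ = e := by rw [projadd he hes, projadd he hes]
  have hQe : (z * star z) * e = e := by
    have := congrArg star heQ
    rwa [star_mul, hQs, hes] at this
  have h := m1 hQi hQs he hes
  rw [hQe, heQ] at h
  exact hQ.trans h.symm

/-- C2 : `y + e = e·y`. -/
theorem c2 {e : S} (he : e * e = e) (hes : star e = e) (y : S) :
    y + e = e * y := by
  set z := y + e with hz
  have h1 : -z + z = e := by
    rw [hz, negadd, negproj he hes]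
    calc (e + -y) + (y + e) = ((e + -y) + y) + e := by rw [← add_assoc]
      _ = (e + (-y + y)) + e := by rw [add_assoc e (-y) y]
      _ = e + (y * star y) + e := by rw [nas]
      _ = e := am1 he hes (ms_idem y) (ms_star y)
  have h2 : z * star z = e := (nas z).symm.trans h1
  have h3 : e * z = z := by
    have := sreg z
    rwa [h2] at this
  have h5 : e * y + e = e * y := by
    have h := g1r (e * y)
    have hms : (e * y) * star (e * y) = e := by
      rw [star_mul, hes]
      calc (e * y) * (star y * e) = e * y * star y * e := by rw [mul_assoc (e*y) (star y) e]
        _ = e * (y * star y) * e := by rw [mul_assoc e y (star y)]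
        _ = e := m1 he hes (ms_idem y) (ms_star y)
    rwa [hms] at h
  calc y + e = e * (y + e) := h3.symm
    _ = e * y + e + e * e := edist he hes y e
    _ = e * y + e + e := by rw [he]
    _ = e * y + (e + e) := by rw [add_assoc]
    _ = e * y + e := by rw [projadd he hes]
    _ = e * y := h5

/-- `(y·e)⋆·(y·e) = e` : left multiplicative unit of `y·e` is `e`. -/
theorem se_val {e : S} (he : e * e = e) (hes : star e = e) (y : S) :
    star (y * e) * (y * e) = e := by
  rw [we_sm he hes y]
  exact m1 he hes (sm_idem y) (sm_star y)

/-- `e + y·e = y·e`. -/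
theorem lu_ye {e : S} (he : e * e = e) (hes : star e = e) (y : S) :
    e + y * e = y * e := by
  have h := g1l (y * e)
  rwa [se_val he hes y] at h

/-- `y·e + y·y⋆ = y·e`. -/
theorem ru_ye {e : S} (he : e * e = e) (hes : star e = e) (y : S) :
    y * e + y * star y = y * e := by
  have h := g1r (y * e)
  rwa [we_ms he hes y] at h

/-- `(e·y)·(e·y)⋆ = e`. -/
theorem es_val {e : S} (he : e * e = e) (hes : star e = e) (y : S) :
    (e * y) * star (e * y) = e := by
  rw [star_mul, hes]
  calc (e * y) * (star y * e) = e * y * star y * e := by rw [mul_assoc (e*y) (star y) e]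
    _ = e * (y * star y) * e := by rw [mul_assoc e y (star y)]
    _ = e := m1 he hes (ms_idem y) (ms_star y)

/-- `(e·y)⋆·(e·y) = y⋆·y`. -/
theorem es_sm {e : S} (he : e * e = e) (hes : star e = e) (y : S) :
    star (e * y) * (e * y) = star y * y := by
  rw [star_mul, hes]
  calc (star y * e) * (e * y) = star y * e * e * y := by rw [mul_assoc (star y * e) e y]
    _ = star y * (e * e) * y := by rw [mul_assoc (star y) e e]
    _ = star y * e * y := by rw [he]
    _ = star y * y := square2 he hes y

/-- `(e·(-y))⋆·(e·(-y)) = y·y⋆`. -/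
theorem eny_sm {e : S} (he : e * e = e) (hes : star e = e) (y : S) :
    star (e * -y) * (e * -y) = y * star y := by
  rw [es_sm he hes (-y), starmulneg]

/-- `(e·(-y))·(e·(-y))⋆ = e`. -/
theorem eny_ms {e : S} (he : e * e = e) (hes : star e = e) (y : S) :
    (e * -y) * star (e * -y) = e := by
  exact es_val he hes (-y)

/-- K1 : `y·e + e·(-y) = e`. -/
theorem k1 {e : S} (he : e * e = e) (hes : star e = e) (y : S) :
    y * e + e * -y = e := by
  set X := y * e + e * -y with hX
  have s1 : e * -y = -y + e := (c2 he hes (-y)).symm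
  have s2 : -y + y * e = y * star y := k2b he hes y
  have s3 : X + y * e = y * e := by
    calc X + y * e = y * e + (e * -y + y * e) := by rw [hX, add_assoc]
      _ = y * e + ((-y + e) + y * e) := by rw [s1]
      _ = y * e + (-y + (e + y * e)) := by rw [add_assoc (-y) e (y*e)]
      _ = y * e + (-y + y * e) := by rw [lu_ye he hes y]
      _ = y * e + y * star y := by rw [s2]
      _ = y * e := ru_ye he hes y
  have s4 : y * e + -(y * e) = e := by rw [ans, se_val he hes y]
  have s5 : X + e = e := by
    calc X + e = X + (y * e + -(y * e)) := by rw [s4]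
      _ = (X + y * e) + -(y * e) := by rw [← add_assoc]
      _ = y * e + -(y * e) := by rw [s3]
      _ = e := s4
  have s6 : X * star X = e := by
    rw [← nas X]
    have t1 : -(y * e) + y * e = y * star y := by rw [nas, we_ms he hes]
    have t2 : y * star y + e * -y = e * -y := by
      have h := g1l (e * -y)
      rwa [eny_sm he hes y] at h
    calc -X + X = (-(e * -y) + -(y * e)) + (y * e + e * -y) := by rw [hX, negadd]
      _ = -(e * -y) + (-(y * e) + (y * e + e * -y)) := by rw [add_assoc]
      _ = -(e * -y) + ((-(y * e) + y * e) + e * -y) := by rw [add_assoc (-(y*e)) (y*e) (e * -y)]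
      _ = -(e * -y) + (y * star y + e * -y) := by rw [t1]
      _ = -(e * -y) + e * -y := by rw [t2]
      _ = e := by rw [nas, eny_ms he hes]
  have s7 : e * X = X := by
    have h := sreg X
    rwa [s6] at h
  have s8 : X = X + e := by
    rw [c2 he hes X, s7]
  rw [hX] at s8 s5 ⊢
  exact s8.trans s5

/-- N5 : `-(e·u) = (-u)·e`. -/
theorem n5 {e : S} (he : e * e = e) (hes : star e = e) (u : S) :
    -(e * u) = -u * e := by
  set v := e * u with hv
  set w := -u * e with hw
  have u1 : w + v = e := by
    have h := k1 he hes (-u)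
    rwa [neg_neg] at h
  have u3 : v + -v = star u * u := by
    rw [ans, hv, es_sm he hes u]
  have u4 : -v + v = e := by
    rw [nas, hv, es_val he hes u]
  have u5 : e + w = w := by
    have h := g1l w
    have : star w * w = e := by
      rw [hw, we_sm he hes (-u), starmulneg]
      exact m1 he hes (ms_idem u) (ms_star u)
    rwa [this] at h
  have u6 : e + -v = -v := by
    have h := g1l (-v)
    have : star (-v) * -v = e := by
      rw [starmulneg, hv, es_val he hes u]
    rwa [this] at h
  have uA : v + w = star u * u := by
    have hk : u + w = star u * u := by
      have h := k2b he hes (-u)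
      rwa [neg_neg, negmulstar, ← hw] at h
    calc v + w = (u + e) + w := by rw [hv, c2 he hes u]
      _ = u + (e + w) := by rw [add_assoc]
      _ = u + w := by rw [u5]
      _ = star u * u := hk
  have hww : w + v + w = w := by
    rw [u1, u5]
  calc -(e * u) = -v := rfl
    _ = e + -v := u6.symm
    _ = (w + v) + -v := by rw [u1]
    _ = w + (v + -v) := by rw [add_assoc]
    _ = w + (v + w) := by rw [u3, ← uA]
    _ = w + v + w := by rw [← add_assoc]
    _ = w := hww

/-- C1 : `e + u = u·e`. -/
theorem c1 {e : S} (he : e * e = e) (hes : star e = e) (u : S) :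
    e + u = u * e := by
  have h1 : -(e + u) = e * -u := by
    rw [negadd, negproj he hes, c2 he hes (-u)]
  have h2 : -(e * -u) = u * e := by
    rw [n5 he hes (-u), neg_neg]
  calc e + u = -(-(e + u)) := (neg_neg _).symm
    _ = -(e * -u) := by rw [h1]
    _ = u * e := h2

/-- t-lemma : `e·j·k·e = e` for projections. -/
theorem tlem {e j k : S} (he : e * e = e) (hes : star e = e)
    (hj : j * j = j) (hjs : star j = j) (hk : k * k = k) (hks : star k = k) :
    e * (j * (k * e)) = e := by
  have w1 : k * e + e = e := (c2 he hes (k * e)).trans (m1' he hes hk hks)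
  have w2 := dist j (k * e) e
  rw [w1, negproj hj hjs] at w2
  have w3 : j * e + e = e := (c2 he hes (j * e)).trans (m1' he hes hj hjs)
  have w4 : e = j * (k * e) + e * j := by
    calc e = j * e + e := w3.symm
      _ = (j * (k * e) + j + j * e) + e := by rw [← w2]
      _ = (j * (k * e) + j) + (j * e + e) := by rw [add_assoc (j*(k*e) + j) (j*e) e]
      _ = (j * (k * e) + j) + e := by rw [w3]
      _ = j * (k * e) + (j + e) := by rw [add_assoc]
      _ = j * (k * e) + e * j := by rw [c2 he hes j]
  have w5 : e = e * (j * (k * e)) + e := by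
    calc e = e * e := he.symm
      _ = e * (j * (k * e) + e * j) := by rw [← w4]
      _ = e * (j * (k * e)) + e + e * (e * j) := edist he hes _ _
      _ = e * (j * (k * e)) + e + e * j := by rw [← mul_assoc e e j, he]
      _ = e * (j * (k * e)) + (e + e * j) := by rw [add_assoc]
      _ = e * (j * (k * e)) + e := by rw [l2 he hes hj hjs]
  have w6 : e * (j * (k * e)) + e = e * (j * (k * e)) := by
    have h := g1r (e * (j * (k * e)))
    rwa [es_val he hes (j * (k * e))] at h
  exact (w5.trans w6).symm

theorem gE {e g : S} (h2 : star g * g = e) : g * e = g := by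
  rw [← h2, ← mul_assoc, sreg]

theorem eG {e g : S} (h1 : g * star g = e) : e * g = g := by
  rw [← h1, sreg]

theorem gplusE {e g : S} (h1 : g * star g = e) : g + e = g := by
  have := g1r g; rwa [h1] at this

theorem eplusG {e g : S} (h2 : star g * g = e) : e + g = g := by
  have := g1l g; rwa [h2] at this

theorem keyg {e g j k : S} (he : e * e = e) (hes : star e = e)
    (hj : j * j = j) (hjs : star j = j) (hk : k * k = k) (hks : star k = k)
    (hg2 : star g * g = e) (z : S) (hz : e * z = z) :
    g * (j * (k * z)) = g * z := by
  calc g * (j * (k * z)) = g * (j * (k * (e * z))) := by rw [hz]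
    _ = g * (j * ((k * e) * z)) := by rw [← mul_assoc k e z]
    _ = g * ((j * (k * e)) * z) := by rw [← mul_assoc j (k*e) z]
    _ = (g * (j * (k * e))) * z := by rw [← mul_assoc]
    _ = ((g * e) * (j * (k * e))) * z := by rw [gE hg2]
    _ = (g * (e * (j * (k * e)))) * z := by rw [mul_assoc g e (j*(k*e))]
    _ = (g * e) * z := by rw [tlem he hes hj hjs hk hks]
    _ = g * z := by rw [gE hg2]

/-- Multiplication formula. -/
theorem mulcore {e i g j k h l : S} (he : e * e = e) (hes : star e = e)
    (hj : j * j = j) (hjs : star j = j) (hk : k * k = k) (hks : star k = k)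
    (hg2 : star g * g = e) (hh1 : h * star h = e) :
    (i * g * j) * (k * h * l) = i * (g * h) * l := by
  have hz : e * (h * l) = h * l := by rw [← mul_assoc, eG hh1]
  calc (i * g * j) * (k * h * l)
      = (i * g) * (j * ((k * h) * l)) := by rw [mul_assoc]
    _ = (i * g) * (j * (k * (h * l))) := by rw [mul_assoc k h l]
    _ = i * (g * (j * (k * (h * l)))) := by rw [mul_assoc i g _]
    _ = i * (g * (h * l)) := by rw [keyg he hes hj hjs hk hks hg2 (h*l) hz]
    _ = i * ((g * h) * l) := by rw [← mul_assoc g h l]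
    _ = i * (g * h) * l := by rw [← mul_assoc]

/-- Star formula. -/
theorem starcore {i g j : S} (his : star i = i) (hjs : star j = j) :
    star (i * g * j) = j * star g * i := by
  rw [star_mul, star_mul, his, hjs, ← mul_assoc]

/-- Decomposition of `i·g·j` as a sum. -/
theorem dec {i g j : S} (hi : i * i = i) (his : star i = i)
    (hj : j * j = j) (hjs : star j = j) :
    i * g * j = j + (g + i) := by
  rw [← c1 hj hjs (i * g), ← c2 hi his g]

/-- `e + (i + l) + e = e` for projections. -/
theorem mid {e i l : S} (he : e * e = e) (hes : star e = e)
    (hi : i * i = i) (his : star i = i) (hl : l * l = l) (hls : star l = l) :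
    e + (i + l) + e = e := by
  have st1 : i + l = l * i := c1 hi his l
  have st2 : e + l * i = (l * i) * e := c1 he hes (l * i)
  have st3 : (l * i) * e + e = e := by
    have h := c2 he hes ((l * i) * e)
    rw [← mul_assoc] at h
    rw [h, mul_assoc e (l*i) e, mul_assoc l i e]
    exact tlem he hes hl hls hi his
  calc e + (i + l) + e = (e + l * i) + e := by rw [st1]
    _ = (l * i) * e + e := by rw [st2]
    _ = e := st3

/-- Addition formula. -/
theorem addcore {e i g j k h l : S} (he : e * e = e) (hes : star e = e)
    (hi : i * i = i) (his : star i = i) (hj : j * j = j) (hjs : star j = j)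
    (hk : k * k = k) (hks : star k = k) (hl : l * l = l) (hls : star l = l)
    (hg1 : g * star g = e) (hh2 : star h * h = e) :
    (i * g * j) + (k * h * l) = k * (g + h) * j := by
  have E : g + ((i + l) + h) = g + h := by
    calc g + ((i + l) + h)
        = g + ((i + l) + (e + h)) := by rw [eplusG hh2]
      _ = g + (((i + l) + e) + h) := by rw [← add_assoc (i+l) e h]
      _ = (g + ((i + l) + e)) + h := by rw [← add_assoc]
      _ = ((g + e) + ((i + l) + e)) + h := by rw [gplusE hg1]
      _ = (g + (e + ((i + l) + e))) + h := by rw [add_assoc g e ((i+l)+e)]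
      _ = (g + ((e + (i + l)) + e)) + h := by rw [← add_assoc e (i+l) e]
      _ = (g + e) + h := by rw [mid he hes hi his hl hls]
      _ = g + h := by rw [gplusE hg1]
  calc (i * g * j) + (k * h * l)
      = (j + (g + i)) + (l + (h + k)) := by
        rw [dec hi his hj hjs, dec hk hks hl hls]
    _ = j + ((g + i) + (l + (h + k))) := by rw [add_assoc]
    _ = j + (g + (i + (l + (h + k)))) := by rw [add_assoc g i _]
    _ = j + (g + ((i + l) + (h + k))) := by rw [← add_assoc i l (h+k)]
    _ = j + (g + (((i + l) + h) + k)) := by rw [← add_assoc (i+l) h k]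
    _ = j + ((g + ((i + l) + h)) + k) := by rw [← add_assoc g _ k]
    _ = j + ((g + h) + k) := by rw [E]
    _ = j + (k * (g + h)) := by rw [← c2 hk hks (g + h)]
    _ = (k * (g + h)) * j := c1 hj hjs (k * (g + h))
    _ = k * (g + h) * j := rfl

/-- Negation formula. -/
theorem negcore {i g j : S} (hi : i * i = i) (his : star i = i)
    (hj : j * j = j) (hjs : star j = j) :
    -(i * g * j) = j * -g * i := by
  calc -(i * g * j) = -(j + (g + i)) := by rw [dec hi his hj hjs]
    _ = -(g + i) + -j := negadd _ _
    _ = (-i + -g) + -j := by rw [negadd g i]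
    _ = (i + -g) + j := by rw [negproj hi his, negproj hj hjs]
    _ = (-g * i) + j := by rw [c1 hi his (-g)]
    _ = j * (-g * i) := c2 hj hjs (-g * i)
    _ = j * -g * i := by rw [← mul_assoc]

/-- Recovery of the first projection. -/
theorem recov1 {i : S} (hi : i * i = i) (his : star i = i) (A : S) :
    (i * A) * star (i * A) = i := by
  rw [star_mul, his]
  calc (i * A) * (star A * i) = ((i * A) * star A) * i := by rw [← mul_assoc]
    _ = (i * (A * star A)) * i := by rw [mul_assoc i A (star A)]
    _ = i := m1 hi his (ms_idem A) (ms_star A)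

/-- Recovery of the last projection. -/
theorem recov2 {j : S} (hj : j * j = j) (hjs : star j = j) (A : S) :
    star (A * j) * (A * j) = j := by
  rw [star_mul, hjs]
  calc (j * star A) * (A * j) = ((j * star A) * A) * j := by rw [← mul_assoc]
    _ = (j * (star A * A)) * j := by rw [mul_assoc j (star A) A]
    _ = j := m1 hj hjs (sm_idem A) (sm_star A)

/-- Recovery of the middle element. -/
theorem recovg {e i g j : S} (he : e * e = e) (hes : star e = e)
    (hi : i * i = i) (his : star i = i) (hj : j * j = j) (hjs : star j = j)
    (hg1 : g * star g = e) (hg2 : star g * g = e) :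
    e * (i * g * j) * e = g := by
  have a : e * (i * g) = g := by
    calc e * (i * g) = (e * i) * g := by rw [← mul_assoc]
      _ = (e * i) * (e * g) := by rw [eG hg1]
      _ = ((e * i) * e) * g := by rw [← mul_assoc]
      _ = e * g := by rw [m1 he hes hi his]
      _ = g := eG hg1
  have b : (g * j) * e = g := by
    calc (g * j) * e = g * (j * e) := mul_assoc g j e
      _ = (g * e) * (j * e) := by rw [gE hg2]
      _ = g * (e * (j * e)) := by rw [mul_assoc]
      _ = g * e := by rw [m1' he hes hj hjs]
      _ = g := gE hg2
  calc e * (i * g * j) * e = (e * (i * g) * j) * e := by rw [← mul_assoc e (i*g) j]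
    _ = (g * j) * e := by rw [a]
    _ = g := b

/-- `e·x·e` lies in the group `H`. -/
theorem ge_proj {e : S} (he : e * e = e) (hes : star e = e) (x : S) :
    ((e * x) * e) * star ((e * x) * e) = e := by
  rw [we_ms he hes (e * x), es_val he hes x]

theorem ge_proj2 {e : S} (he : e * e = e) (hes : star e = e) (x : S) :
    star ((e * x) * e) * ((e * x) * e) = e := by
  rw [we_sm he hes (e * x), es_sm he hes x]
  exact m1 he hes (sm_idem x) (sm_star x)

/-- Surjectivity value computation. -/
theorem surj_val {e : S} (he : e * e = e) (hes : star e = e) (x : S) :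
    (x * star x) * ((e * x) * e) * (star x * x) = x := by
  have hpx : (x * star x) * x = x := sreg x
  have stepA : (x * star x) * (e * x) = x := by
    calc (x * star x) * (e * x)
        = (x * star x) * (e * ((x * star x) * x)) := by rw [hpx]
      _ = (x * star x) * ((e * (x * star x)) * x) := by rw [← mul_assoc e (x * star x) x]
      _ = ((x * star x) * (e * (x * star x))) * x := by rw [← mul_assoc]
      _ = (((x * star x) * e) * (x * star x)) * x := by rw [← mul_assoc (x * star x) e (x * star x)]
      _ = (x * star x) * x := by rw [m1 (ms_idem x) (ms_star x) he hes]
      _ = x := hpx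
  calc (x * star x) * ((e * x) * e) * (star x * x)
      = (((x * star x) * (e * x)) * e) * (star x * x) := by rw [← mul_assoc (x * star x) (e*x) e]
    _ = (x * e) * (star x * x) := by rw [stepA]
    _ = ((x * e) * star x) * x := by rw [← mul_assoc]
    _ = (x * star x) * x := by rw [square1 he hes x]
    _ = x := hpx

end SSLBAux

theorem stmt5 {S : Type*} [SSLB S] (e : S) (he : e * e = e ∧ star e = e) :
    Function.Bijective
      (fun x : {p : S // p * p = p ∧ star p = p} ×
          {h : S // h * star h = e ∧ star h * h = e} ×
          {p : S // p * p = p ∧ star p = p} =>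
        (x.1 : S) * (x.2.1 : S) * (x.2.2 : S)) ∧
    (∀ i j k l g h : S,
      i * i = i → star i = i → j * j = j → star j = j →
      k * k = k → star k = k → l * l = l → star l = l →
      g * star g = e → star g * g = e → h * star h = e → star h * h = e →
      (i * g * j) * (k * h * l) = i * (g * h) * l ∧
      star (i * g * j) = j * star g * i ∧
      (i * g * j) + (k * h * l) = k * (g + h) * j ∧
      -(i * g * j) = j * (-g) * i) := by
  obtain ⟨he1, he2⟩ := he
  constructor
  · constructor
    · rintro ⟨⟨i, hi, his⟩, ⟨g, hg1, hg2⟩, ⟨j, hj, hjs⟩⟩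
        ⟨⟨i', hi', his'⟩, ⟨g', hg1', hg2'⟩, ⟨j', hj', hjs'⟩⟩ hEq
      simp only [Subtype.coe_mk] at hEq
      have ei : i = i' := by
        have h1 := SSLBAux.recov1 hi his (g * j)
        have h2 := SSLBAux.recov1 hi' his' (g' * j')
        rw [← mul_assoc] at h1 h2
        rw [hEq] at h1
        exact h1.symm.trans h2
      have ej : j = j' := by
        have h1 := SSLBAux.recov2 hj hjs (i * g)
        have h2 := SSLBAux.recov2 hj' hjs' (i' * g')
        rw [hEq] at h1
        exact h1.symm.trans h2
      have eg : g = g' := by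
        have h1 := SSLBAux.recovg he1 he2 hi his hj hjs hg1 hg2
        have h2 := SSLBAux.recovg he1 he2 hi' his' hj' hjs' hg1' hg2'
        rw [hEq] at h1
        exact h1.symm.trans h2
      simp only [Prod.mk.injEq, Subtype.mk.injEq]
      exact ⟨ei, eg, ej⟩
    · intro x
      refine ⟨⟨⟨x * star x, SSLBAux.ms_idem x, SSLBAux.ms_star x⟩,
        ⟨(e * x) * e, SSLBAux.ge_proj he1 he2 x, SSLBAux.ge_proj2 he1 he2 x⟩,
        ⟨star x * x, SSLBAux.sm_idem x, SSLBAux.sm_star x⟩⟩, ?_⟩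
      exact SSLBAux.surj_val he1 he2 x
  · intro i j k l g h hi his hj hjs hk hks hl hls hg1 hg2 hh1 hh2
    exact ⟨SSLBAux.mulcore he1 he2 hj hjs hk hks hg2 hh1,
      SSLBAux.starcore his hjs,
      SSLBAux.addcore he1 he2 hi his hj hjs hk hks hl hls hg1 hh2,
      SSLBAux.negcore hi his hj hjs⟩
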